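/- Assume that there exists a monotone G_δ hull operation on N, the class of Lebesgue null subsets of [0,1]. Then for every chain C ⊆ P([0,1]) (i.e. a family of subsets of [0,1] totally ordered by inclusion: for every C, C' ∈ C either C ⊆ C' or C' ⊆ C), there exists a monotone G_δ hull operation on C. -/

import Mathlib

open MeasureTheory Set
open scoped ENNReal NNReal

noncomputable section

/-- The class of Lebesgue null subsets of `[0,1]`. -/
def NullSets : Set (Set ℝ) := {A | A ⊆ Icc (0:ℝ) 1 ∧ volume A = 0}

/-- `φ` is a monotone hull operation on the class `D ⊆ 𝒫([0,1])`, where the hulls are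
required to satisfy the predicate `Good` (e.g. Borel or Gδ). Here `volume` applied to an
arbitrary set is the Lebesgue outer measure. -/
def IsMonotoneHullOn (D : Set (Set ℝ)) (Good : Set ℝ → Prop) (φ : Set ℝ → Set ℝ) : Prop :=
  (∀ A ∈ D, Good (φ A) ∧ φ A ⊆ Icc (0:ℝ) 1 ∧ A ⊆ φ A ∧ volume (φ A) = volume A) ∧
  ∀ A ∈ D, ∀ A' ∈ D, A ⊆ A' → φ A ⊆ φ A'

/-- Every subset of `[0,1]` has a Gδ hull inside `[0,1]`. -/
private lemma exists_gdelta_hull (A : Set ℝ) (hA : A ⊆ Icc (0:ℝ) 1) :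
    ∃ G : Set ℝ, IsGδ G ∧ G ⊆ Icc (0:ℝ) 1 ∧ A ⊆ G ∧ volume G = volume A := by
  have hfin : volume A ≠ ⊤ :=
    ((measure_mono hA).trans_lt (by rw [Real.volume_Icc]; exact ENNReal.ofReal_lt_top)).ne
  have hU : ∀ n : ℕ, ∃ U, A ⊆ U ∧ IsOpen U ∧ volume U < volume A + ((n : ℝ≥0∞) + 1)⁻¹ :=
    fun n => Set.exists_isOpen_lt_of_lt A _
      (ENNReal.lt_add_right hfin (by simp [ENNReal.inv_ne_zero]))
  choose U hAU hUo hUv using hU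
  have hsub : A ⊆ Icc (0:ℝ) 1 ∩ ⋂ n, U n := subset_inter hA (subset_iInter hAU)
  refine ⟨_, (isClosed_Icc.isGδ).inter (IsGδ.iInter fun n => (hUo n).isGδ),
    inter_subset_left, hsub, le_antisymm ?_ (measure_mono hsub)⟩
  refine ENNReal.le_of_forall_pos_le_add fun ε hε _ => ?_
  obtain ⟨n, hn⟩ := ENNReal.exists_inv_nat_lt
    (show (ε : ℝ≥0∞) ≠ 0 from ENNReal.coe_ne_zero.2 hε.ne')
  calc volume (Icc (0:ℝ) 1 ∩ ⋂ n, U n) ≤ volume (U n) :=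
        measure_mono (inter_subset_right.trans (iInter_subset _ n))
    _ ≤ volume A + ((n : ℝ≥0∞) + 1)⁻¹ := (hUv n).le
    _ ≤ volume A + (n : ℝ≥0∞)⁻¹ :=
        add_le_add_right (ENNReal.inv_le_inv.2 (le_add_right le_rfl)) _
    _ ≤ volume A + ε := add_le_add_right hn.le _

/-- Every set `R` of extended nonneg reals has a countable subset which is
"dense from above" in `R`. -/
private lemma exists_countable_from_above (R : Set ℝ≥0∞) :
    ∃ Q, Q ⊆ R ∧ Q.Countable ∧ ∀ r ∈ R, ∀ s, r < s → ∃ q ∈ Q, r ≤ q ∧ q < s := by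
  classical
  rcases R.eq_empty_or_nonempty with rfl | ⟨r₀, hr₀⟩
  · exact ⟨∅, Subset.rfl, countable_empty, fun r hr => absurd hr (notMem_empty r)⟩
  obtain ⟨D, hDc, hDd⟩ := TopologicalSpace.exists_countable_dense ℝ≥0∞
  set g : ℝ≥0∞ × ℝ≥0∞ → ℝ≥0∞ := fun p =>
    if h : (R ∩ Ioo p.1 p.2).Nonempty then h.choose else r₀ with hg
  have hgR : ∀ p, g p ∈ R := by
    intro p; rw [hg]; dsimp only; split_ifs with h
    exacts [h.choose_spec.1, hr₀]
  have hgmem : ∀ p, (R ∩ Ioo p.1 p.2).Nonempty → g p ∈ R ∩ Ioo p.1 p.2 := by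
    intro p h; rw [hg]; dsimp only; rw [dif_pos h]; exact h.choose_spec
  set Q₂ : Set ℝ≥0∞ := {x ∈ R | ∃ s, x < s ∧ R ∩ Ioo x s = ∅} with hQ₂
  have hQ₂c : Q₂.Countable := by
    have hch : ∀ x ∈ Q₂, ∃ d ∈ D, x < d ∧ ∀ y ∈ R, x < y → d < y := by
      rintro x ⟨hxR, s, hxs, hgap⟩
      obtain ⟨m, hm⟩ := exists_between hxs
      obtain ⟨d, hdD, hdIoo⟩ := hDd.exists_mem_open isOpen_Ioo ⟨m, hm⟩
      refine ⟨d, hdD, hdIoo.1, fun y hyR hxy => ?_⟩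
      have hsy : s ≤ y := by
        by_contra hys
        have : y ∈ R ∩ Ioo x s := ⟨hyR, hxy, not_le.1 hys⟩
        rw [hgap] at this
        exact notMem_empty y this
      exact hdIoo.2.trans_le hsy
    choose! f hfD hfx hflt using hch
    refine MapsTo.countable_of_injOn (fun x hx => hfD x hx) ?_ hDc
    intro x hx y hy heq
    by_contra hne
    rcases lt_or_gt_of_ne hne with hlt | hlt
    · exact absurd heq ((hflt x hx y hy.1 hlt).trans (hfx y hy)).ne
    · exact absurd heq.symm ((hflt y hy x hx.1 hlt).trans (hfx x hx)).ne
  refine ⟨(g '' (D ×ˢ D)) ∪ Q₂, ?_, ((hDc.prod hDc).image g).union hQ₂c, ?_⟩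
  · rintro q (⟨p, _, rfl⟩ | hq)
    exacts [hgR p, hq.1]
  · intro r hr s hrs
    by_cases hne : (R ∩ Ioo r s).Nonempty
    · obtain ⟨r'', hr''R, hr''⟩ := hne
      obtain ⟨d₁, hd₁D, hd₁⟩ := hDd.exists_mem_open isOpen_Ioo (nonempty_Ioo.2 hr''.1)
      obtain ⟨d₂, hd₂D, hd₂⟩ := hDd.exists_mem_open isOpen_Ioo (nonempty_Ioo.2 hr''.2)
      have hpair : (R ∩ Ioo d₁ d₂).Nonempty := ⟨r'', hr''R, hd₁.2, hd₂.1⟩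
      obtain ⟨_, hq2, hq3⟩ := hgmem (d₁, d₂) hpair
      exact ⟨g (d₁, d₂), Or.inl ⟨(d₁, d₂), mk_mem_prod hd₁D hd₂D, rfl⟩,
        (hd₁.1.trans hq2).le, hq3.trans hd₂.2⟩
    · exact ⟨r, Or.inr ⟨hr, s, hrs, not_nonempty_iff_eq_empty.1 hne⟩, le_rfl, hrs⟩

/-- If there is a monotone Gδ hull operation on `N`, then every chain (w.r.t. inclusion)
of subsets of `[0,1]` admits a monotone Gδ hull operation. -/
theorem monotone_Gdelta_hull_on_chain
    (h : ∃ φ : Set ℝ → Set ℝ, IsMonotoneHullOn NullSets IsGδ φ) :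
    ∀ C : Set (Set ℝ), (∀ c ∈ C, c ⊆ Icc (0:ℝ) 1) → IsChain (· ⊆ ·) C →
      ∃ φ : Set ℝ → Set ℝ, IsMonotoneHullOn C IsGδ φ := by
  classical
  obtain ⟨ψ, hψh, hψm⟩ := h
  intro C hC1 hC2
  rcases C.eq_empty_or_nonempty with rfl | hCne
  · exact ⟨id, fun A hA => absurd hA (notMem_empty A),
      fun A hA => absurd hA (notMem_empty A)⟩
  set R : Set ℝ≥0∞ := volume '' C with hRdef
  -- finite volumes
  have hvol_top : ∀ A ∈ C, volume A ≠ ⊤ := fun A hA =>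
    ((measure_mono (hC1 A hA)).trans_lt
      (by rw [Real.volume_Icc]; exact ENNReal.ofReal_lt_top)).ne
  have hmemR : ∀ A ∈ C, volume A ∈ R := fun A hA => ⟨A, hA, rfl⟩
  -- representative for each value
  have hrepex : ∀ q ∈ R, ∃ A, A ∈ C ∧ volume A = q := fun q hq => by
    obtain ⟨A, hA, hAq⟩ := hq; exact ⟨A, hA, hAq⟩
  choose! rep hrepC hrepv using hrepex
  -- Gδ hulls of representatives
  have hGex : ∀ q ∈ R, ∃ G : Set ℝ, IsGδ G ∧ G ⊆ Icc (0:ℝ) 1 ∧ rep q ⊆ G ∧ volume G = q := by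
    intro q hq
    obtain ⟨G, h1, h2, h3, h4⟩ := exists_gdelta_hull (rep q) (hC1 _ (hrepC q hq))
    exact ⟨G, h1, h2, h3, by rw [h4, hrepv q hq]⟩
  choose! G hG1 hG2 hG3 hG4 using hGex
  obtain ⟨Q, hQR, hQc, hQs⟩ := exists_countable_from_above R
  -- chain comparison by measure
  have hlt : ∀ A ∈ C, ∀ B ∈ C, volume A < volume B → A ⊆ B := by
    intro A hA B hB hv
    rcases eq_or_ne A B with rfl | hne
    · exact subset_rfl
    rcases hC2 hA hB hne with hs | hs
    · exact hs
    · exact absurd (measure_mono hs) (not_le.2 hv)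
  -- everything of smaller volume is inside G q
  have hsubG : ∀ A ∈ C, ∀ q ∈ Q, volume A < q → A ⊆ G q := by
    intro A hA q hq hvq
    have hqR := hQR hq
    refine (hlt A hA (rep q) (hrepC q hqR) ?_).trans (hG3 q hqR)
    rw [hrepv q hqR]; exact hvq
  -- same level: A \ G (volume A) is null
  have hdiffG : ∀ A ∈ C, volume A ∈ R → volume (A \ G (volume A)) = 0 := by
    intro A hA hvR
    set v := volume A with hv
    have hArep := hrepC v hvR
    have hvrep := hrepv v hvR
    rcases hC2.total hA hArep with hs | hs
    · have he : A \ G v = ∅ := diff_eq_empty.2 (hs.trans (hG3 v hvR))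
      rw [he]; exact measure_empty
    · set T := toMeasurable volume A with hT
      have hTv : volume T = v := measure_toMeasurable A
      have key : volume (T ∩ G v) + volume (T \ G v) = volume T :=
        measure_inter_add_diff T ((hG1 v hvR).measurableSet)
      have h1 : v ≤ volume (T ∩ G v) := by
        conv_lhs => rw [← hvrep]
        exact measure_mono (subset_inter (hs.trans (subset_toMeasurable _ _)) (hG3 v hvR))
      have h2 : volume (T ∩ G v) ≤ v :=
        (measure_mono inter_subset_right).trans_eq (hG4 v hvR)
      have h3 : volume (T ∩ G v) = v := le_antisymm h2 h1
      have hvne : v ≠ ⊤ := hvol_top A hA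
      have h4 : volume (T \ G v) = 0 := by
        rw [h3, hTv] at key
        exact (ENNReal.add_right_inj hvne).1 (by rw [key, add_zero])
      exact measure_mono_null (diff_subset_diff_left (subset_toMeasurable _ _)) h4
  -- the nested Gδ "main parts"
  set Hh : ℝ≥0∞ → Set ℝ := fun r => Icc (0:ℝ) 1 ∩ ⋂ q ∈ {q ∈ Q | r ≤ q}, G q with hHh
  set Hp : ℝ≥0∞ → Set ℝ := fun r => Icc (0:ℝ) 1 ∩ ⋂ q ∈ {q ∈ Q | r < q}, G q with hHp
  have hHhGδ : ∀ r, IsGδ (Hh r) := fun r =>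
    (isClosed_Icc.isGδ).inter (IsGδ.biInter (hQc.mono (sep_subset _ _))
      fun q hq => hG1 q (hQR hq.1))
  have hHpGδ : ∀ r, IsGδ (Hp r) := fun r =>
    (isClosed_Icc.isGδ).inter (IsGδ.biInter (hQc.mono (sep_subset _ _))
      fun q hq => hG1 q (hQR hq.1))
  have hHhIcc : ∀ r, Hh r ⊆ Icc (0:ℝ) 1 := fun r => inter_subset_left
  have hHhsubG : ∀ r q, q ∈ Q → r ≤ q → Hh r ⊆ G q := fun r q hq hrq =>
    inter_subset_right.trans (biInter_subset_of_mem (show q ∈ {q ∈ Q | r ≤ q} from ⟨hq, hrq⟩))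
  have hHhmono : ∀ r r', r ≤ r' → Hh r ⊆ Hh r' := by
    intro r r' hrr'
    refine inter_subset_inter_right _ (biInter_subset_biInter_left ?_)
    intro q hq; exact ⟨hq.1, hrr'.trans hq.2⟩
  have hHpsubHh : ∀ r r', r < r' → Hp r ⊆ Hh r' := by
    intro r r' hrr'
    refine inter_subset_inter_right _ (biInter_subset_biInter_left ?_)
    intro q hq; exact ⟨hq.1, hrr'.trans_le hq.2⟩
  -- A sits inside Hp (volume A)
  have hAsubHp : ∀ A ∈ C, A ⊆ Hp (volume A) := by
    intro A hA
    refine subset_inter (hC1 A hA) (subset_iInter₂ fun q hq => hsubG A hA q hq.1 hq.2)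
  -- A \ Hh (volume A) is null
  have hAdiffH : ∀ A ∈ C, volume (A \ Hh (volume A)) = 0 := by
    intro A hA
    have hsub : A \ Hh (volume A) ⊆ A \ G (volume A) := by
      rintro x ⟨hxA, hxH⟩
      refine ⟨hxA, fun hxG => hxH ⟨hC1 A hA hxA, ?_⟩⟩
      refine mem_iInter₂.2 fun q hq => ?_
      rcases eq_or_lt_of_le hq.2 with heq | hlt'
      · rwa [← heq]
      · exact hsubG A hA q hq.1 hlt' hxA
    exact measure_mono_null hsub (hdiffG A hA (hmemR A hA))
  -- measure of Hh (volume A)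
  have hHhvol : ∀ A ∈ C, volume (Hh (volume A)) ≤ volume A := by
    intro A hA
    by_contra hcon
    obtain ⟨q, hqQ, hq1, hq2⟩ :=
      hQs (volume A) (hmemR A hA) (volume (Hh (volume A))) (not_le.1 hcon)
    exact absurd ((measure_mono (hHhsubG _ q hqQ hq1)).trans_eq (hG4 q (hQR hqQ))) (not_le.2 hq2)
  -- membership of the exceptional parts in NullSets
  have hN : ∀ A ∈ C, (A \ Hh (volume A)) ∈ NullSets := fun A hA =>
    ⟨diff_subset.trans (hC1 A hA), hAdiffH A hA⟩
  -- the hull operation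
  refine ⟨fun A => Hh (volume A) ∪ (ψ (A \ Hh (volume A)) ∩ Hp (volume A)), ?_, ?_⟩
  · -- hull properties
    intro A hA
    obtain ⟨hψGδ, hψIcc, hψsub, hψvol⟩ := hψh _ (hN A hA)
    have hAsub : A ⊆ Hh (volume A) ∪ (ψ (A \ Hh (volume A)) ∩ Hp (volume A)) := by
      intro x hx
      by_cases hxH : x ∈ Hh (volume A)
      · exact Or.inl hxH
      · exact Or.inr ⟨hψsub ⟨hx, hxH⟩, hAsubHp A hA hx⟩
    refine ⟨(hHhGδ _).union (hψGδ.inter (hHpGδ _)),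
      union_subset (hHhIcc _) (inter_subset_left.trans hψIcc), hAsub, le_antisymm ?_ ?_⟩
    · calc volume (Hh (volume A) ∪ (ψ (A \ Hh (volume A)) ∩ Hp (volume A)))
          ≤ volume (Hh (volume A) ∪ ψ (A \ Hh (volume A))) :=
            measure_mono (union_subset_union_right _ inter_subset_left)
        _ ≤ volume (Hh (volume A)) + volume (ψ (A \ Hh (volume A))) := measure_union_le _ _
        _ = volume (Hh (volume A)) := by rw [hψvol, hAdiffH A hA, add_zero]
        _ ≤ volume A := hHhvol A hA
    · exact measure_mono hAsub
  · -- monotonicity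
    intro A hA A' hA' hsub
    dsimp only
    have hv : volume A ≤ volume A' := measure_mono hsub
    rcases eq_or_lt_of_le hv with heq | hlt'
    · rw [← heq]
      refine union_subset_union_right _ (inter_subset_inter_left _ ?_)
      have h1 := hN A hA
      have h2 := hN A' hA'
      rw [← heq] at h2
      exact hψm _ h1 _ h2 (diff_subset_diff_left hsub)
    · have hmain : Hh (volume A) ⊆ Hh (volume A') := hHhmono _ _ hv
      have hside : ψ (A \ Hh (volume A)) ∩ Hp (volume A) ⊆ Hh (volume A') :=
        inter_subset_right.trans (hHpsubHh _ _ hlt')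
      exact union_subset (hmain.trans subset_union_left) (hside.trans subset_union_left)
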